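/- In the errorless relay AoI model with S = U, there exists a policy (greedy sampling and updating) such that for all t, R_S(t) = min{tS, K} and R_U(t) = min{(t−1)U, K}, where R_S(t) = Σ_{k ∈ S(t)} g_k(t) and R_U(t) = Σ_{k ∈ U(t)} (h_k(t) − g_k(t)); in particular this policy satisfies Σ_{τ=1}^{t−1} R_S(τ) = Σ_{τ=1}^{t} R_U(τ) for all t. -/

import Mathlib

open Finset
open Fin.NatCast

section Policy
variable (K s : ℕ) [NeZero K]

def Spol (t : ℕ) : Finset (Fin K) :=
  (Finset.range s).image (fun i => (((t - 1) * s + i : ℕ) : Fin K))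

def lastS (t : ℕ) (k : Fin K) : ℕ :=
  ((Finset.range t).filter (fun u => k ∈ Spol K s u)).sup id

def gpol : ℕ → Fin K → ℕ
  | 0, _ => 0
  | 1, _ => 1
  | (t+2), k => if k ∈ Spol K s (t+1) then 1 else gpol (t+1) k + 1

def hpol : ℕ → Fin K → ℕ
  | 0, _ => 0
  | 1, _ => 1
  | (t+2), k => if k ∈ Spol K s t then gpol K s (t+1) k + 1 else hpol (t+1) k + 1

lemma lastS_le (t : ℕ) (k : Fin K) : lastS K s t k ≤ t - 1 := by
  apply Finset.sup_le
  intro u hu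
  simp only [mem_filter, mem_range] at hu
  simpa [id] using Nat.le_sub_one_of_lt hu.1

lemma lastS_zero (k : Fin K) : lastS K s 0 k = 0 := by
  simp [lastS]

lemma lastS_succ (t : ℕ) (k : Fin K) :
    lastS K s (t+1) k = if k ∈ Spol K s t then t else lastS K s t k := by
  unfold lastS
  rw [Finset.range_add_one, Finset.filter_insert]
  split
  · rw [Finset.sup_insert]
    have := lastS_le K s t k
    simp only [id]
    refine max_eq_left ?_
    calc ((Finset.range t).filter (fun u => k ∈ Spol K s u)).sup id ≤ t - 1 := lastS_le K s t k
      _ ≤ t := Nat.sub_le _ _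
  · rfl

lemma gpol_eq (t : ℕ) (ht : 1 ≤ t) (k : Fin K) :
    gpol K s t k = t - lastS K s t k := by
  induction t with
  | zero => omega
  | succ t ih =>
    rcases Nat.eq_or_lt_of_le ht with h1 | h1
    · -- t + 1 = 1
      have : t = 0 := by omega
      subst this
      simp [gpol, lastS_succ, lastS_zero]
    · have ht1 : 1 ≤ t := by omega
      obtain ⟨t', rfl⟩ : ∃ t', t = t' + 1 := ⟨t - 1, by omega⟩
      rw [lastS_succ]
      by_cases hk : k ∈ Spol K s (t' + 1)
      · rw [if_pos hk]
        show gpol K s (t' + 2) k = _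
        rw [gpol, if_pos hk]
        omega
      · rw [if_neg hk]
        show gpol K s (t' + 2) k = _
        rw [gpol, if_neg hk, ih ht1]
        have := lastS_le K s (t' + 1) k
        omega

lemma hpol_eq (t : ℕ) (ht : 1 ≤ t) (k : Fin K) :
    hpol K s t k = t - lastS K s (t - 1) k := by
  induction t with
  | zero => omega
  | succ t ih =>
    rcases Nat.eq_or_lt_of_le ht with h1 | h1
    · have : t = 0 := by omega
      subst this
      simp [hpol, lastS_zero]
    · have ht1 : 1 ≤ t := by omega
      obtain ⟨t', rfl⟩ : ∃ t', t = t' + 1 := ⟨t - 1, by omega⟩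
      show hpol K s (t' + 2) k = (t' + 2) - lastS K s (t' + 1) k
      rw [hpol, lastS_succ]
      by_cases hk : k ∈ Spol K s t'
      · rw [if_pos hk, if_pos hk, gpol_eq K s (t'+1) (by omega)]
        rw [lastS_succ, if_pos hk]
        have := lastS_le K s t' k
        omega
      · rw [if_neg hk, if_neg hk, ih ht1]
        simp only [Nat.add_sub_cancel]
        have := lastS_le K s t' k
        omega

end Policy

section Main
variable (K s : ℕ) [NeZero K]

lemma mem_Spol {t : ℕ} {k : Fin K} :
    k ∈ Spol K s t ↔ ∃ i < s, ((t - 1) * s + i) % K = k.val := by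
  unfold Spol
  rw [Finset.mem_image]
  constructor
  · rintro ⟨i, hi, rfl⟩
    exact ⟨i, Finset.mem_range.mp hi, (Fin.val_natCast _ K).symm⟩
  · rintro ⟨i, hi, h⟩
    exact ⟨i, Finset.mem_range.mpr hi, by apply Fin.ext; rw [Fin.val_natCast]; exact h⟩

lemma card_Spol (hsK : s < K) (t : ℕ) : (Spol K s t).card = s := by
  rw [Spol, Finset.card_image_of_injOn, Finset.card_range]
  intro i hi j hj hij
  simp only [Finset.mem_coe, Finset.mem_range] at hi hj
  have h : ((t - 1) * s + i) % K = ((t - 1) * s + j) % K := by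
    have := congrArg Fin.val hij
    rwa [Fin.val_natCast, Fin.val_natCast] at this
  have h2 : i ≡ j [MOD K] := Nat.ModEq.add_left_cancel' ((t - 1) * s) h
  rw [Nat.ModEq, Nat.mod_eq_of_lt (by omega), Nat.mod_eq_of_lt (by omega)] at h2
  exact h2

lemma lastS_eq (hs : 1 ≤ s) (hsK : s < K) (t : ℕ) (ht : 1 ≤ t) (i : ℕ) (hi : i < s) :
    lastS K s t ((((t - 1) * s + i : ℕ)) : Fin K) =
      if (t - 1) * s + i < K then 0 else ((t - 1) * s + i - K) / s + 1 := by
  set p := (t - 1) * s + i with hp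
  set k : Fin K := ((p : ℕ) : Fin K) with hk
  have hkv : k.val = p % K := Fin.val_natCast p K
  have key : ∀ u, 1 ≤ u → u < t → k ∈ Spol K s u → K ≤ p ∧ u ≤ (p - K) / s + 1 := by
    intro u hu1 hut hmem
    rw [mem_Spol] at hmem
    obtain ⟨j, hj, hmod⟩ := hmem
    set q := (u - 1) * s + j with hq
    have hqp : q < p := by
      have h1 : (u - 1) * s + j < u * s := by
        have he : u - 1 + 1 = u := by omega
        calc (u - 1) * s + j < (u - 1) * s + s := by omega
          _ = (u - 1 + 1) * s := by ring
          _ = u * s := by rw [he]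
      have h2 : u * s ≤ (t - 1) * s := Nat.mul_le_mul_right s (by omega)
      omega
    have hdvd : K ∣ p - q := by
      have hmeq : q ≡ p [MOD K] := by rw [Nat.ModEq, hmod, hkv]
      exact (Nat.modEq_iff_dvd' (le_of_lt hqp)).mp hmeq
    have hKle : K ≤ p - q := Nat.le_of_dvd (by omega) hdvd
    refine ⟨by omega, ?_⟩
    have hle : (u - 1) * s ≤ p - K := by omega
    have := (Nat.le_div_iff_mul_le (by omega : 0 < s)).mpr hle
    omega
  by_cases hpK : p < K
  · rw [if_pos hpK]
    apply Nat.le_zero.mp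
    apply Finset.sup_le
    intro u hu
    simp only [Finset.mem_filter, Finset.mem_range] at hu
    rcases Nat.eq_zero_or_pos u with h0 | h0
    · simp [h0]
    · exact absurd (key u h0 hu.1 hu.2).1 (by omega)
  · rw [if_neg hpK]
    have ht2 : 2 ≤ t := by
      rcases (by omega : t = 1 ∨ 2 ≤ t) with h1 | h2
      · exfalso; apply hpK; rw [hp, h1]; simpa using by omega
      · exact h2
    apply le_antisymm
    · apply Finset.sup_le
      intro u hu
      simp only [Finset.mem_filter, Finset.mem_range] at hu
      rcases Nat.eq_zero_or_pos u with h0 | h0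
      · simp [h0]
      · exact (key u h0 hu.1 hu.2).2
    · have hLt : (p - K) / s + 1 < t := by
        have : (p - K) / s < t - 1 := by
          rw [Nat.div_lt_iff_lt_mul (by omega : 0 < s)]
          omega
        omega
      have hmem : k ∈ Spol K s ((p - K) / s + 1) := by
        rw [mem_Spol]
        refine ⟨(p - K) % s, Nat.mod_lt _ (by omega), ?_⟩
        have he : ((p - K) / s + 1 - 1) * s + (p - K) % s = p - K := by
          simp only [Nat.add_sub_cancel]
          exact Nat.div_add_mod' _ _
        rw [he, hkv]
        conv_rhs => rw [show p = (p - K) + K by omega]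
        rw [Nat.add_mod_right]
      refine Finset.le_sup (f := id) ?_
      simp only [Finset.mem_filter, Finset.mem_range]
      exact ⟨hLt, hmem⟩

end Main

section Sums
variable (K s : ℕ) [NeZero K]

lemma sumfloor (hs : 1 ≤ s) (q0 : ℕ) : ∑ i ∈ Finset.range s, (q0 + i) / s = q0 := by
  induction q0 with
  | zero =>
    apply Finset.sum_eq_zero
    intro i hi
    exact Nat.div_eq_of_lt (by simp at hi; omega)
  | succ n ih =>
    have h1 : ∑ i ∈ Finset.range (s + 1), (n + i) / s = n + (n + s) / s := by
      rw [Finset.sum_range_succ, ih]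
    have h2 : ∑ i ∈ Finset.range (s + 1), (n + i) / s
        = (∑ i ∈ Finset.range s, (n + 1 + i) / s) + n / s := by
      rw [Finset.sum_range_succ']
      congr 1
      apply Finset.sum_congr rfl
      intro i _
      congr 1
      omega
    have h3 : (n + s) / s = n / s + 1 := Nat.add_div_right n (by omega)
    omega

lemma sumS (hs : 1 ≤ s) (hsK : s < K) (t : ℕ) (ht : 1 ≤ t) :
    (∑ k ∈ Spol K s t, ((t : ℤ) - lastS K s t k)) = (min (t * s) K : ℕ) := by
  rw [Spol, Finset.sum_image (by
    intro i hi j hj hij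
    simp only [Finset.mem_coe, Finset.mem_range] at hi hj
    have h : ((t - 1) * s + i) % K = ((t - 1) * s + j) % K := by
      have := congrArg Fin.val hij
      rwa [Fin.val_natCast, Fin.val_natCast] at this
    have h2 : i ≡ j [MOD K] := Nat.ModEq.add_left_cancel' ((t - 1) * s) h
    rwa [Nat.ModEq, Nat.mod_eq_of_lt (by omega), Nat.mod_eq_of_lt (by omega)] at h2)]
  have hts : t * s = (t - 1) * s + s := by
    have : t = (t - 1) + 1 := by omega
    calc t * s = ((t - 1) + 1) * s := by rw [← this]
      _ = (t - 1) * s + s := by ring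
  set A := (t - 1) * s with hA
  have hrw : ∀ i ∈ Finset.range s,
      ((t : ℤ) - lastS K s t (((A + i : ℕ)) : Fin K))
        = (t : ℤ) - (if A + i < K then 0 else (A + i - K) / s + 1 : ℕ) := by
    intro i hi
    rw [lastS_eq K s hs hsK t ht i (Finset.mem_range.mp hi)]
  rw [Finset.sum_congr rfl hrw]
  rcases le_or_gt (t * s) K with hc1 | hc1
  · -- all p < K
    rw [Nat.min_eq_left hc1]
    have : ∀ i ∈ Finset.range s,
        ((t : ℤ) - (if A + i < K then 0 else (A + i - K) / s + 1 : ℕ)) = (t : ℤ) := by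
      intro i hi
      rw [if_pos (by simp at hi; omega)]
      simp
    rw [Finset.sum_congr rfl this, Finset.sum_const, Finset.card_range]
    push_cast
    ring
  · rw [Nat.min_eq_right (le_of_lt hc1)]
    rcases le_or_gt K A with hc2 | hc2
    · -- all p ≥ K
      have : ∀ i ∈ Finset.range s,
          ((t : ℤ) - (if A + i < K then 0 else (A + i - K) / s + 1 : ℕ))
            = ((t : ℤ) - 1) - ((A - K + i) / s : ℕ) := by
        intro i hi
        rw [if_neg (by omega)]
        have : A + i - K = A - K + i := by omega
        rw [this]
        push_cast
        ring
      rw [Finset.sum_congr rfl this, Finset.sum_sub_distrib, Finset.sum_const,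
        Finset.card_range, ← Nat.cast_sum, sumfloor s hs (A - K)]
      have h1 : (s : ℤ) * ((t : ℤ) - 1) - ((A - K : ℕ) : ℤ) = K := by
        have hAK : ((A - K : ℕ) : ℤ) = (A : ℤ) - K := by
          push_cast [Nat.cast_sub hc2]; ring
        rw [hAK]
        have : (A : ℤ) = (t - 1 : ℤ) * s := by
          rw [hA]
          push_cast [Nat.cast_sub (by omega : 1 ≤ t)]
          ring
        rw [this]; ring
      simpa using h1
    · -- mixed: A < K < t*s
      set i0 := K - A with hi0
      have hi0s : i0 < s := by omega
      rw [Finset.range_eq_Ico, ← Finset.sum_Ico_consecutive _ (Nat.zero_le i0) (le_of_lt hi0s)]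
      have hpart1 : ∀ i ∈ Finset.Ico 0 i0,
          ((t : ℤ) - (if A + i < K then 0 else (A + i - K) / s + 1 : ℕ)) = (t : ℤ) := by
        intro i hi
        simp only [Finset.mem_Ico] at hi
        rw [if_pos (by omega)]
        simp
      have hpart2 : ∀ i ∈ Finset.Ico i0 s,
          ((t : ℤ) - (if A + i < K then 0 else (A + i - K) / s + 1 : ℕ)) = (t : ℤ) - 1 := by
        intro i hi
        simp only [Finset.mem_Ico] at hi
        rw [if_neg (by omega)]
        have h1 : A + i - K = i - i0 := by omega
        rw [h1, Nat.div_eq_of_lt (by omega)]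
        simp
      rw [Finset.sum_congr rfl hpart1, Finset.sum_congr rfl hpart2,
        Finset.sum_const, Finset.sum_const, Nat.card_Ico, Nat.card_Ico]
      simp only [Nat.sub_zero, nsmul_eq_mul]
      have e1 : ((i0 : ℤ)) * t + ((s - i0 : ℕ) : ℤ) * ((t : ℤ) - 1) = K := by
        have h1 : ((s - i0 : ℕ) : ℤ) = (s : ℤ) - i0 := by push_cast [Nat.cast_sub (le_of_lt hi0s)]; ring
        have h2 : (i0 : ℤ) = (K : ℤ) - A := by rw [hi0]; omega
        have h3 : (A : ℤ) + s = (t : ℤ) * s := by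
          have : ((A + s : ℕ) : ℤ) = ((t * s : ℕ) : ℤ) := by rw [hts]
          push_cast at this
          linarith
        rw [h1, h2]
        nlinarith [h3]
      linarith [e1]

end Sums

lemma sum_min_shift (s K : ℕ) : ∀ t : ℕ,
    ∑ τ ∈ Finset.Icc 1 t, ((min ((τ - 1) * s) K : ℕ) : ℤ)
      = ∑ τ ∈ Finset.Icc 1 (t - 1), ((min (τ * s) K : ℕ) : ℤ) := by
  intro t
  induction t with
  | zero => simp
  | succ t ih =>
    rw [Finset.sum_Icc_succ_top (by omega : 1 ≤ t + 1), ih]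
    simp only [Nat.add_sub_cancel]
    rcases Nat.eq_zero_or_pos t with h0 | h0
    · subst h0; simp
    · rw [show t = (t - 1) + 1 by omega, Finset.sum_Icc_succ_top (by omega : 1 ≤ t - 1 + 1)]
      congr 2 <;> omega

/-- There exists a greedy sampling-and-updating policy with `|S(t)| = |U(t)| = s` such that
`R_S(t) = min{ts, K}`, `R_U(t) = min{(t−1)s, K}`, and consequently
`Σ_{τ≤t−1} R_S(τ) = Σ_{τ≤t} R_U(τ)` for all `t`. -/
theorem stmt10 (K s : ℕ) (hs : 1 ≤ s) (hsK : s < K) :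
    ∃ (S U : ℕ → Finset (Fin K)) (g h : ℕ → Fin K → ℕ),
      (∀ t, 1 ≤ t → (S t).card = s) ∧
      (∀ t, 1 ≤ t → (U t).card = s) ∧
      (∀ k, g 1 k = 1) ∧ (∀ k, h 1 k = 1) ∧
      (∀ t, 1 ≤ t → ∀ k ∈ S t, g (t + 1) k = 1) ∧
      (∀ t, 1 ≤ t → ∀ k ∉ S t, g (t + 1) k = g t k + 1) ∧
      (∀ t, 1 ≤ t → ∀ k ∈ U t, h (t + 1) k = g t k + 1) ∧
      (∀ t, 1 ≤ t → ∀ k ∉ U t, h (t + 1) k = h t k + 1) ∧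
      (∀ t, 1 ≤ t → (∑ k ∈ S t, (g t k : ℤ)) = (min (t * s) K : ℕ)) ∧
      (∀ t, 1 ≤ t → (∑ k ∈ U t, ((h t k : ℤ) - g t k)) = (min ((t - 1) * s) K : ℕ)) ∧
      (∀ t, 1 ≤ t →
        (∑ τ ∈ Finset.Icc 1 (t - 1), ∑ k ∈ S τ, (g τ k : ℤ)) =
          ∑ τ ∈ Finset.Icc 1 t, ∑ k ∈ U τ, ((h τ k : ℤ) - g τ k)) := by
  haveI : NeZero K := ⟨by omega⟩
  have RS : ∀ t, 1 ≤ t → (∑ k ∈ Spol K s t, ((gpol K s t k : ℤ))) = (min (t * s) K : ℕ) := by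
    intro t ht
    calc (∑ k ∈ Spol K s t, ((gpol K s t k : ℤ)))
        = ∑ k ∈ Spol K s t, ((t : ℤ) - lastS K s t k) := by
          apply Finset.sum_congr rfl
          intro k _
          rw [gpol_eq K s t ht]
          have := lastS_le K s t k
          omega
      _ = (min (t * s) K : ℕ) := sumS K s hs hsK t ht
  have RU : ∀ t, 1 ≤ t →
      (∑ k ∈ Spol K s (t - 1), ((hpol K s t k : ℤ) - gpol K s t k)) = (min ((t - 1) * s) K : ℕ) := by
    intro t ht
    rcases (by omega : t = 1 ∨ 2 ≤ t) with h1 | h2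
    · subst h1
      simp [gpol, hpol]
    · calc (∑ k ∈ Spol K s (t - 1), ((hpol K s t k : ℤ) - gpol K s t k))
          = ∑ k ∈ Spol K s (t - 1), (((t - 1 : ℕ) : ℤ) - lastS K s (t - 1) k) := by
            apply Finset.sum_congr rfl
            intro k hk
            rw [hpol_eq K s t (by omega), gpol_eq K s t (by omega)]
            have h1 : lastS K s ((t - 1) + 1) k = t - 1 := by rw [lastS_succ, if_pos hk]
            rw [show (t - 1) + 1 = t by omega] at h1
            rw [h1]
            have := lastS_le K s (t - 1) k
            omega
        _ = (min ((t - 1) * s) K : ℕ) := sumS K s hs hsK (t - 1) (by omega)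
  refine ⟨Spol K s, fun t => Spol K s (t - 1), gpol K s, hpol K s,
    fun t _ => card_Spol K s hsK t, fun t _ => card_Spol K s hsK (t - 1),
    fun k => rfl, fun k => rfl, ?_, ?_, ?_, ?_, RS, RU, ?_⟩
  · intro t ht k hk
    obtain ⟨t', rfl⟩ : ∃ t', t = t' + 1 := ⟨t - 1, by omega⟩
    show gpol K s (t' + 2) k = 1
    rw [gpol, if_pos hk]
  · intro t ht k hk
    obtain ⟨t', rfl⟩ : ∃ t', t = t' + 1 := ⟨t - 1, by omega⟩
    show gpol K s (t' + 2) k = _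
    rw [gpol, if_neg hk]
  · intro t ht k hk
    obtain ⟨t', rfl⟩ : ∃ t', t = t' + 1 := ⟨t - 1, by omega⟩
    simp only [Nat.add_sub_cancel] at hk
    show hpol K s (t' + 2) k = _
    rw [hpol, if_pos hk]
  · intro t ht k hk
    obtain ⟨t', rfl⟩ : ∃ t', t = t' + 1 := ⟨t - 1, by omega⟩
    simp only [Nat.add_sub_cancel] at hk
    show hpol K s (t' + 2) k = _
    rw [hpol, if_neg hk]
  · intro t ht
    calc (∑ τ ∈ Finset.Icc 1 (t - 1), ∑ k ∈ Spol K s τ, ((gpol K s τ k : ℤ)))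
        = ∑ τ ∈ Finset.Icc 1 (t - 1), ((min (τ * s) K : ℕ) : ℤ) := by
          apply Finset.sum_congr rfl
          intro τ hτ
          exact RS τ (by simp only [Finset.mem_Icc] at hτ; omega)
      _ = ∑ τ ∈ Finset.Icc 1 t, ((min ((τ - 1) * s) K : ℕ) : ℤ) := (sum_min_shift s K t).symm
      _ = _ := by
          apply Finset.sum_congr rfl
          intro τ hτ
          exact (RU τ (by simp only [Finset.mem_Icc] at hτ; omega)).symm
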